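/- Let α, β > −1, let μ, p > 0 with μp = k a positive integer, and let b > −p. For each n ∈ ℕ let A_{m,n} (0 ≤ m ≤ n+k) be the unique real coefficients with I^μ[Q_n^{(α,β,b,p)}] = Σ_{m=0}^{n+k} A_{m,n} Q_m^{(α,β,b,p)} on (−1,1], and set A_{m,n} = 0 for m > n+k. Then for all i, n ∈ ℕ the following finite-sum identity holds: Σ_{m=i}^{n+k} C^{(α,β)}_{i,m} A_{m,n} = 2^{μ(1−p)} · (Γ((b+i−k)/p + 1)/Γ((b+i−k)/p + μ + 1)) · C^{(α,β)}_{i−k,n} if i ≥ k (with C^{(α,β)}_{i−k,n} := 0 when i−k > n), and Σ_{m=i}^{n+k} C^{(α,β)}_{i,m} A_{m,n} = 0 if i < k. Equivalently, the fractional integration matrix A satisfies C^{(α,β)} A = 2^{μ(1−p)} Λ_{b/p,1/p} C^{(α,β)}, where Λ_{b/p,1/p} is the matrix supported on the k-th subdiagonal with entries Γ(b/p + j/p + 1)/Γ(b/p + j/p + μ + 1) in position (j+k, j). -/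

import Mathlib

open MeasureTheory

noncomputable def Ccoef (α β : ℝ) (k n : ℕ) : ℝ :=
  if k ≤ n then
    (-1 : ℝ) ^ (n - k) * (ascPochhammer ℝ (n - k)).eval ((k : ℝ) + β + 1)
      * (ascPochhammer ℝ k).eval ((n : ℝ) + α + β + 1)
      / (2 ^ k * (Nat.factorial (n - k)) * (Nat.factorial k))
  else 0

noncomputable def jacobiP (α β : ℝ) (n : ℕ) (x : ℝ) : ℝ :=
  ∑ k ∈ Finset.range (n + 1), Ccoef α β k n * (1 + x) ^ k

noncomputable def jfpQ (α β b p : ℝ) (n : ℕ) (x : ℝ) : ℝ :=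
  (2 * ((1 + x) / 2) ^ (1 / p)) ^ b * jacobiP α β n (2 * ((1 + x) / 2) ^ (1 / p) - 1)

noncomputable def fracInt (μ : ℝ) (f : ℝ → ℝ) (x : ℝ) : ℝ :=
  (1 / Real.Gamma μ) * ∫ t in (-1 : ℝ)..x, (x - t) ^ (μ - 1) * f t


open MeasureTheory Set

private lemma betaEqOn {u v : ℝ} :
    ∀ x ∈ Set.uIcc (0:ℝ) 1,
      ((x ^ (u-1) * (1-x) ^ (v-1) : ℝ) : ℂ)
        = (x : ℂ) ^ ((u:ℂ) - 1) * (1 - (x:ℂ)) ^ ((v:ℂ) - 1) := by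
  intro x hx
  rw [Set.uIcc_of_le (by norm_num)] at hx
  have hx0 : (0:ℝ) ≤ x := hx.1
  have hx1 : (0:ℝ) ≤ 1 - x := by linarith [hx.2]
  have h1 : ((u:ℂ) - 1) = ((u - 1 : ℝ) : ℂ) := by push_cast; ring
  have h2 : ((v:ℂ) - 1) = ((v - 1 : ℝ) : ℂ) := by push_cast; ring
  have h3 : (1 - (x:ℂ)) = ((1 - x : ℝ) : ℂ) := by push_cast; ring
  rw [h1, h2, h3, ← Complex.ofReal_cpow hx0, ← Complex.ofReal_cpow hx1, Complex.ofReal_mul]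

private lemma realBeta_integrable {u v : ℝ} (hu : 0 < u) (hv : 0 < v) :
    IntervalIntegrable (fun x : ℝ => x ^ (u-1) * (1-x) ^ (v-1)) volume 0 1 := by
  have hc := Complex.betaIntegral_convergent (u := u) (v := v) (by simpa using hu)
    (by simpa using hv)
  rw [intervalIntegrable_iff] at hc ⊢
  have h2 : IntegrableOn (fun x : ℝ => ((x ^ (u-1) * (1-x) ^ (v-1) : ℝ) : ℂ))
      (Set.uIoc (0:ℝ) 1) volume := by
    refine hc.congr_fun (fun x hx => ?_) measurableSet_uIoc
    exact (betaEqOn x (uIoc_subset_uIcc hx)).symm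
  have := h2.re
  simp at this ⊢
  exact this

private lemma realBeta_value {u v : ℝ} (hu : 0 < u) (hv : 0 < v) :
    Real.Gamma u * Real.Gamma v
      = Real.Gamma (u + v) * ∫ x in (0:ℝ)..1, x ^ (u-1) * (1-x) ^ (v-1) := by
  have h := Complex.Gamma_mul_Gamma_eq_betaIntegral (s := u) (t := v)
    (by simpa using hu) (by simpa using hv)
  have hbeta : Complex.betaIntegral u v
      = ((∫ x in (0:ℝ)..1, x ^ (u-1) * (1-x) ^ (v-1) : ℝ) : ℂ) := by
    rw [Complex.betaIntegral]
    calc (∫ x : ℝ in (0:ℝ)..1, (x : ℂ) ^ ((u:ℂ) - 1) * (1 - (x:ℂ)) ^ ((v:ℂ) - 1))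
        = ∫ x : ℝ in (0:ℝ)..1, ((x ^ (u-1) * (1-x) ^ (v-1) : ℝ) : ℂ) :=
          intervalIntegral.integral_congr fun x hx => (betaEqOn x hx).symm
      _ = _ := RCLike.intervalIntegral_ofReal
  rw [hbeta, ← Complex.ofReal_add, Complex.Gamma_ofReal, Complex.Gamma_ofReal,
    Complex.Gamma_ofReal] at h
  exact_mod_cast h

open MeasureTheory Set

private lemma integrand_eq {m l x : ℝ} (hx : -1 < x) :
    ∀ t ∈ Set.Ioc (-1:ℝ) x,
      (1+x) ^ (m - 1 + l) * (((1+x)⁻¹ * (t+1)) ^ l * (1 - (1+x)⁻¹ * (t+1)) ^ (m-1))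
        = (x - t) ^ (m-1) * (1+t) ^ l := by
  intro t ht
  have hX : (0:ℝ) < 1 + x := by linarith
  have h1 : (0:ℝ) ≤ t + 1 := by linarith [ht.1]
  have h2 : (0:ℝ) ≤ x - t := by linarith [ht.2]
  have e1 : (1+x)⁻¹ * (t+1) = (t+1) / (1+x) := by ring
  have e2 : 1 - (t+1) / (1+x) = (x - t) / (1+x) := by
    rw [one_sub_div hX.ne']
    congr 1
    ring
  rw [e1, e2, Real.div_rpow h1 hX.le, Real.div_rpow h2 hX.le, Real.rpow_add hX]
  have hl : (1+x) ^ l ≠ 0 := (Real.rpow_pos_of_pos hX l).ne'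
  have hm : (1+x) ^ (m-1) ≠ 0 := (Real.rpow_pos_of_pos hX (m-1)).ne'
  have e3 : (1:ℝ) + t = t + 1 := by ring
  rw [e3]
  field_simp

private lemma singular_integrable {m l x : ℝ} (hm : 0 < m) (hl : -1 < l) (hx : -1 < x) :
    IntervalIntegrable (fun t => (x - t) ^ (m-1) * (1+t) ^ l) volume (-1) x := by
  have hX : (0:ℝ) < 1 + x := by linarith
  have hg : IntervalIntegrable (fun v : ℝ => v ^ l * (1-v) ^ (m-1)) volume 0 1 := by
    have := realBeta_integrable (u := l + 1) (v := m) (by linarith) hm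
    simpa using this
  have h1 : IntervalIntegrable (fun t : ℝ => ((1+x)⁻¹ * t) ^ l * (1 - (1+x)⁻¹ * t) ^ (m-1))
      volume 0 (1+x) := by
    have := hg.comp_mul_left (c := (1+x)⁻¹)
    simpa [hX.ne'] using this
  have h2 : IntervalIntegrable
      (fun t : ℝ => ((1+x)⁻¹ * (t+1)) ^ l * (1 - (1+x)⁻¹ * (t+1)) ^ (m-1))
      volume (-1) x := by
    have h := h1.comp_add_right 1
    rw [show (0:ℝ) - 1 = -1 by norm_num, show (1+x) - 1 = x by ring] at h
    exact h
  have h3 := h2.const_mul ((1+x) ^ (m - 1 + l))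
  rw [intervalIntegrable_iff] at h3 ⊢
  refine h3.congr_fun (fun t ht => ?_) measurableSet_uIoc
  rw [Set.uIoc_of_le (by linarith : (-1:ℝ) ≤ x)] at ht
  exact integrand_eq hx t ht

private lemma singular_value {m l x : ℝ} (hm : 0 < m) (hl : -1 < l) (hx : -1 < x) :
    ∫ t in (-1:ℝ)..x, (x - t) ^ (m-1) * (1+t) ^ l
      = Real.Gamma (l+1) * Real.Gamma m / Real.Gamma (l + m + 1) * (1+x) ^ (l + m) := by
  have hX : (0:ℝ) < 1 + x := by linarith
  have step1 : ∫ t in (-1:ℝ)..x, (x - t) ^ (m-1) * (1+t) ^ l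
      = ∫ t in (-1:ℝ)..x,
          (1+x) ^ (m - 1 + l) * (((1+x)⁻¹ * (t+1)) ^ l * (1 - (1+x)⁻¹ * (t+1)) ^ (m-1)) := by
    refine intervalIntegral.integral_congr_ae (Filter.Eventually.of_forall fun t ht => ?_)
    rw [Set.uIoc_of_le (by linarith : (-1:ℝ) ≤ x)] at ht
    exact (integrand_eq hx t ht).symm
  rw [step1, intervalIntegral.integral_const_mul]
  have step2 : (∫ t in (-1:ℝ)..x, ((1+x)⁻¹ * (t+1)) ^ l * (1 - (1+x)⁻¹ * (t+1)) ^ (m-1))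
      = ∫ t in (0:ℝ)..(1+x), ((1+x)⁻¹ * t) ^ l * (1 - (1+x)⁻¹ * t) ^ (m-1) := by
    have h := intervalIntegral.integral_comp_add_right (a := (-1:ℝ)) (b := x)
      (fun t : ℝ => ((1+x)⁻¹ * t) ^ l * (1 - (1+x)⁻¹ * t) ^ (m-1)) 1
    rw [show (-1:ℝ) + 1 = 0 by norm_num, show x + 1 = 1 + x by ring] at h
    exact h
  have step3 : (∫ t in (0:ℝ)..(1+x), ((1+x)⁻¹ * t) ^ l * (1 - (1+x)⁻¹ * t) ^ (m-1))
      = (1+x) * ∫ v in (0:ℝ)..1, v ^ l * (1-v) ^ (m-1) := by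
    have := intervalIntegral.integral_comp_mul_left (a := (0:ℝ)) (b := 1 + x)
      (fun v : ℝ => v ^ l * (1-v) ^ (m-1)) (inv_ne_zero hX.ne')
    rw [this]
    simp [hX.ne', smul_eq_mul]
  have hβ : (∫ v in (0:ℝ)..1, v ^ l * (1-v) ^ (m-1))
      = Real.Gamma (l+1) * Real.Gamma m / Real.Gamma (l + 1 + m) := by
    have hval := realBeta_value (u := l + 1) (v := m) (by linarith) hm
    have hne : Real.Gamma (l + 1 + m) ≠ 0 := (Real.Gamma_pos_of_pos (by linarith)).ne'
    have he : (∫ v in (0:ℝ)..1, v ^ (l + 1 - 1) * (1-v) ^ (m-1))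
        = ∫ v in (0:ℝ)..1, v ^ l * (1-v) ^ (m-1) := by norm_num
    rw [he] at hval
    rw [eq_div_iff hne]
    linear_combination -hval
  rw [step2, step3, hβ]
  have hpow : (1+x) ^ (m - 1 + l) * (1+x) = (1+x) ^ (l + m) := by
    have h1 : (1+x) ^ (l+m) = (1+x) ^ (m-1+l) * (1+x) ^ (1:ℝ) := by
      rw [← Real.rpow_add hX]
      congr 1
      ring
    rw [h1, Real.rpow_one]
  have harg : l + 1 + m = l + m + 1 := by ring
  rw [harg, ← hpow]
  ring

open MeasureTheory Set

private noncomputable def Ecoef (b p : ℝ) (j : ℕ) : ℝ := (2:ℝ) ^ ((b + (j:ℝ)) * (1 - 1/p))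

private noncomputable def Gcoef (b p μ : ℝ) (j : ℕ) : ℝ :=
  Real.Gamma ((b + (j:ℝ))/p + 1) / Real.Gamma ((b + (j:ℝ))/p + μ + 1)

private lemma jfpQ_expand {α β b p : ℝ} (hp : 0 < p) {x : ℝ} (hx : -1 < x) (m : ℕ) :
    jfpQ α β b p m x
      = ∑ i ∈ Finset.range (m+1),
          Ccoef α β i m * Ecoef b p i * (1+x) ^ ((b + i) / p) := by
  simp only [Ecoef]
  have hu : (0:ℝ) < (1+x)/2 := by linarith
  have hw : (0:ℝ) < 2 * ((1+x)/2) ^ (1/p) := by positivity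
  rw [jfpQ, jacobiP, Finset.mul_sum]
  refine Finset.sum_congr rfl fun i _ => ?_
  have h1y : 1 + (2 * ((1+x)/2) ^ (1/p) - 1) = 2 * ((1+x)/2) ^ (1/p) := by ring
  rw [h1y]
  set w : ℝ := 2 * ((1+x)/2) ^ (1/p) with hwdef
  have e1 : w ^ b * (Ccoef α β i m * w ^ i)
      = Ccoef α β i m * (w ^ b * w ^ (i:ℕ)) := by ring
  rw [e1]
  have e2 : w ^ b * w ^ (i:ℕ) = w ^ (b + i) := by
    rw [← Real.rpow_natCast w i, ← Real.rpow_add hw]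
  rw [e2]
  have e3 : w ^ (b + (i:ℝ)) = 2 ^ (b + (i:ℝ)) * ((1+x)/2) ^ ((b + (i:ℝ)) / p) := by
    rw [hwdef, Real.mul_rpow (by norm_num) (Real.rpow_nonneg hu.le _),
      ← Real.rpow_mul hu.le]
    congr 1
    field_simp
  rw [e3, Real.div_rpow (by linarith : (0:ℝ) ≤ 1 + x) (by norm_num : (0:ℝ) ≤ 2)]
  have e4 : (2:ℝ) ^ (b + (i:ℝ)) * ((1+x) ^ ((b+(i:ℝ))/p) / 2 ^ ((b+(i:ℝ))/p))
      = ((2:ℝ) ^ (b + (i:ℝ)) / 2 ^ ((b+(i:ℝ))/p)) * (1+x) ^ ((b+(i:ℝ))/p) := by ring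
  rw [e4, ← Real.rpow_sub (by norm_num : (0:ℝ) < 2)]
  have e5 : b + (i:ℝ) - (b + (i:ℝ))/p = (b + (i:ℝ)) * (1 - 1/p) := by ring
  rw [e5, mul_assoc]

private lemma lam_gt {b p : ℝ} (hp : 0 < p) (hb : -p < b) (i : ℕ) :
    -1 < (b + (i:ℝ)) / p := by
  rw [lt_div_iff₀ hp]
  have : (0:ℝ) ≤ (i:ℝ) := Nat.cast_nonneg i
  nlinarith

private lemma fracInt_jfpQ {α β b p μ : ℝ} (hμ : 0 < μ) (hp : 0 < p) (hb : -p < b)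
    {x : ℝ} (hx : x ∈ Set.Ioc (-1:ℝ) 1) (n : ℕ) :
    fracInt μ (jfpQ α β b p n) x
      = ∑ i ∈ Finset.range (n+1),
          Ccoef α β i n * Ecoef b p i * Gcoef b p μ i
            * (1+x) ^ ((b + i)/p + μ) := by
  simp only [Ecoef, Gcoef]
  obtain ⟨hx1, hx2⟩ := hx
  have hΓμ : Real.Gamma μ ≠ 0 := (Real.Gamma_pos_of_pos hμ).ne'
  have step1 : (∫ t in (-1:ℝ)..x, (x - t) ^ (μ - 1) * jfpQ α β b p n t)
      = ∫ t in (-1:ℝ)..x, ∑ i ∈ Finset.range (n+1),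
          Ccoef α β i n * (2:ℝ) ^ ((b + i) * (1 - 1/p))
            * ((x - t) ^ (μ - 1) * (1+t) ^ ((b + i) / p)) := by
    refine intervalIntegral.integral_congr_ae (Filter.Eventually.of_forall fun t ht => ?_)
    rw [Set.uIoc_of_le (by linarith : (-1:ℝ) ≤ x)] at ht
    rw [jfpQ_expand hp ht.1 n, Finset.mul_sum]
    simp only [Ecoef]
    refine Finset.sum_congr rfl fun i _ => ?_
    ring
  have step2 : (∫ t in (-1:ℝ)..x, ∑ i ∈ Finset.range (n+1),
          Ccoef α β i n * (2:ℝ) ^ ((b + i) * (1 - 1/p))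
            * ((x - t) ^ (μ - 1) * (1+t) ^ ((b + i) / p)))
      = ∑ i ∈ Finset.range (n+1), Ccoef α β i n * (2:ℝ) ^ ((b + i) * (1 - 1/p))
          * ∫ t in (-1:ℝ)..x, (x - t) ^ (μ - 1) * (1+t) ^ ((b + i) / p) := by
    rw [intervalIntegral.integral_finset_sum]
    · exact Finset.sum_congr rfl fun i _ => intervalIntegral.integral_const_mul _ _
    · intro i _
      exact (singular_integrable hμ (lam_gt hp hb i) hx1).const_mul _
  rw [fracInt, step1, step2, Finset.mul_sum]
  refine Finset.sum_congr rfl fun i _ => ?_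
  rw [singular_value hμ (lam_gt hp hb i) hx1]
  have hne : Real.Gamma ((b + (i:ℝ))/p + μ + 1) ≠ 0 := by
    have := lam_gt hp hb i
    exact (Real.Gamma_pos_of_pos (by linarith)).ne'
  set a1 := Real.Gamma ((b + (i:ℝ))/p + 1) with ha1
  set a2 := Real.Gamma ((b + (i:ℝ))/p + μ + 1) with ha2
  set a3 := (1+x) ^ ((b + (i:ℝ))/p + μ) with ha3
  field_simp

open MeasureTheory Set

private lemma vanish {N : ℕ} (c r : Fin N → ℝ) (hr : Function.Injective r)
    (h : ∀ x ∈ Set.Ioc (-1:ℝ) 1, ∑ j, c j * (1+x) ^ (r j) = 0) : ∀ j, c j = 0 := by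
  have hmono : StrictMono fun y : ℝ => (2:ℝ) ^ y := fun a b hab => by
    rw [Real.rpow_lt_rpow_left_iff (by norm_num : (1:ℝ) < 2)]; exact hab
  have hf : Function.Injective fun j => (2:ℝ) ^ (-(r j)) := by
    intro j1 j2 hj
    exact hr (neg_injective (hmono.injective hj))
  have key : ∀ i : Fin N, (∑ j, c j * ((2:ℝ) ^ (-(r j))) ^ (i:ℕ)) = 0 := by
    intro i
    have hxi : ((2:ℝ) ^ (-((i:ℕ):ℝ)) - 1) ∈ Set.Ioc (-1:ℝ) 1 := by
      constructor
      · have := Real.rpow_pos_of_pos (by norm_num : (0:ℝ) < 2) (-((i:ℕ):ℝ))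
        linarith
      · have := Real.rpow_le_one_of_one_le_of_nonpos (by norm_num : (1:ℝ) ≤ 2)
          (by simp : -((i:ℕ):ℝ) ≤ 0)
        linarith
    have hsum := h _ hxi
    have hterm : ∀ j, (1 + ((2:ℝ) ^ (-((i:ℕ):ℝ)) - 1)) ^ (r j)
        = ((2:ℝ) ^ (-(r j))) ^ (i:ℕ) := by
      intro j
      have e1 : 1 + ((2:ℝ) ^ (-((i:ℕ):ℝ)) - 1) = (2:ℝ) ^ (-((i:ℕ):ℝ)) := by ring
      rw [e1, ← Real.rpow_natCast ((2:ℝ) ^ (-(r j))) i,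
        ← Real.rpow_mul (by norm_num : (0:ℝ) ≤ 2),
        ← Real.rpow_mul (by norm_num : (0:ℝ) ≤ 2)]
      congr 1
      ring
    rw [Finset.sum_congr rfl fun j _ => by rw [hterm j]] at hsum
    exact hsum
  have := Matrix.eq_zero_of_forall_pow_sum_mul_pow_eq_zero hf key
  intro j
  exact congrFun this j

open MeasureTheory Set

private lemma column_identity (α β μ p b : ℝ) (hμ : 0 < μ) (hp : 0 < p)
    (k : ℕ) (hμp : μ * p = k) (hb : -p < b) (A : ℕ → ℕ → ℝ)
    (hA : ∀ n : ℕ, ∀ x ∈ Set.Ioc (-1 : ℝ) 1,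
      fracInt μ (jfpQ α β b p n) x
        = ∑ m ∈ Finset.range (n + k + 1), A m n * jfpQ α β b p m x)
    (n : ℕ) : ∀ j : ℕ, j ≤ n + k →
    (if k ≤ j then Ccoef α β (j-k) n * Ecoef b p (j-k) * Gcoef b p μ (j-k) else 0)
      = (∑ m ∈ Finset.range (n+k+1), A m n * Ccoef α β j m) * Ecoef b p j := by
  have hp0 : p ≠ 0 := hp.ne'
  have hμk : μ = (k:ℝ)/p := by field_simp [← hμp]; exact hμp
  set N := n + k + 1 with hN
  set Lf : ℕ → ℝ := fun j =>
    if k ≤ j then Ccoef α β (j-k) n * Ecoef b p (j-k) * Gcoef b p μ (j-k) else 0 with hLf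
  set Rf : ℕ → ℝ := fun j =>
    (∑ m ∈ Finset.range N, A m n * Ccoef α β j m) * Ecoef b p j with hRf
  have main : ∀ x ∈ Set.Ioc (-1:ℝ) 1,
      ∑ j : Fin N, (Lf (j:ℕ) - Rf (j:ℕ)) * (1+x) ^ ((b + ((j:ℕ):ℝ))/p) = 0 := by
    intro x hx
    have hLHS : fracInt μ (jfpQ α β b p n) x
        = ∑ j ∈ Finset.range N, Lf j * (1+x) ^ ((b + (j:ℝ))/p) := by
      rw [fracInt_jfpQ hμ hp hb hx n]
      have hexp : ∀ i' : ℕ, (b + (i':ℝ))/p + μ = (b + ((i' + k : ℕ):ℝ))/p := by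
        intro i'
        push_cast
        rw [hμk]
        field_simp
        ring
      calc (∑ i' ∈ Finset.range (n+1),
              Ccoef α β i' n * Ecoef b p i' * Gcoef b p μ i' * (1+x) ^ ((b + i')/p + μ))
          = ∑ i' ∈ Finset.range (n+1),
              Ccoef α β i' n * Ecoef b p i' * Gcoef b p μ i'
                * (1+x) ^ ((b + ((i' + k : ℕ):ℝ))/p) := by
            refine Finset.sum_congr rfl fun i' _ => ?_
            rw [hexp i']
        _ = ∑ j ∈ Finset.Ico k N, Lf j * (1+x) ^ ((b + (j:ℝ))/p) := by
            rw [Finset.sum_Ico_eq_sum_range]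
            have hNk : N - k = n + 1 := by omega
            rw [hNk]
            refine Finset.sum_congr rfl fun i' _ => ?_
            simp only [hLf]
            rw [if_pos (Nat.le_add_right k i'), Nat.add_sub_cancel_left, add_comm k i']
        _ = ∑ j ∈ Finset.range N, Lf j * (1+x) ^ ((b + (j:ℝ))/p) := by
            rw [Finset.range_eq_Ico,
              ← Finset.sum_Ico_consecutive _ (Nat.zero_le k) (by omega : k ≤ N)]
            have h0 : ∑ j ∈ Finset.Ico 0 k, Lf j * (1+x) ^ ((b + (j:ℝ))/p) = 0 := by
              refine Finset.sum_eq_zero fun j hj => ?_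
              have hjk : ¬ k ≤ j := by
                rw [Finset.mem_Ico] at hj
                omega
              simp only [hLf]
              rw [if_neg hjk, zero_mul]
            rw [h0, zero_add]
    have hRHS : (∑ m ∈ Finset.range N, A m n * jfpQ α β b p m x)
        = ∑ j ∈ Finset.range N, Rf j * (1+x) ^ ((b + (j:ℝ))/p) := by
      have hstep : ∀ m ∈ Finset.range N, A m n * jfpQ α β b p m x
          = ∑ j ∈ Finset.range N,
              A m n * (Ccoef α β j m * Ecoef b p j * (1+x) ^ ((b + (j:ℝ))/p)) := by
        intro m hm
        rw [jfpQ_expand hp hx.1 m, Finset.mul_sum]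
        have hsub : Finset.range (m+1) ⊆ Finset.range N := by
          apply Finset.range_subset_range.mpr
          rw [Finset.mem_range] at hm
          omega
        rw [Finset.sum_subset hsub]
        intro j _ hj
        have hjm : ¬ j ≤ m := by
          rw [Finset.mem_range] at hj
          omega
        simp [Ccoef, hjm]
      rw [Finset.sum_congr rfl hstep, Finset.sum_comm]
      refine Finset.sum_congr rfl fun j _ => ?_
      simp only [hRf]
      rw [Finset.sum_mul, Finset.sum_mul]
      refine Finset.sum_congr rfl fun m _ => ?_
      ring
    have heq := hA n x hx
    rw [hLHS, hRHS] at heq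
    rw [Fin.sum_univ_eq_sum_range
      (fun j => (Lf j - Rf j) * (1+x) ^ ((b + (j:ℝ))/p)) N]
    have e : ∀ j ∈ Finset.range N, (Lf j - Rf j) * (1+x) ^ ((b + (j:ℝ))/p)
        = Lf j * (1+x) ^ ((b + (j:ℝ))/p) - Rf j * (1+x) ^ ((b + (j:ℝ))/p) :=
      fun j _ => by ring
    rw [Finset.sum_congr rfl e, Finset.sum_sub_distrib, heq, sub_self]
  have hr : Function.Injective fun j : Fin N => (b + ((j:ℕ):ℝ))/p := by
    intro j1 j2 hj
    simp only at hj
    have h3 : (j1:ℕ) = (j2:ℕ) := by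
      field_simp at hj
      exact_mod_cast add_left_cancel hj
    exact Fin.ext h3
  have hzero := vanish (fun j : Fin N => Lf (j:ℕ) - Rf (j:ℕ))
    (fun j : Fin N => (b + ((j:ℕ):ℝ))/p) hr main
  intro j hj
  have hz := hzero ⟨j, by omega⟩
  simp only at hz
  exact sub_eq_zero.mp hz


/-- the fractional integration matrix `A` satisfies
`C^{(α,β)} A = 2^{μ(1-p)} Λ_{b/p,1/p} C^{(α,β)}`. -/
theorem fracInt_matrix_identity
    (α β : ℝ) (hα : -1 < α) (hβ : -1 < β)
    (μ p b : ℝ) (hμ : 0 < μ) (hp : 0 < p)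
    (k : ℕ) (hk : 0 < k) (hμp : μ * p = k) (hb : -p < b)
    (A : ℕ → ℕ → ℝ)
    (hA : ∀ n : ℕ, ∀ x ∈ Set.Ioc (-1 : ℝ) 1,
      fracInt μ (jfpQ α β b p n) x
        = ∑ m ∈ Finset.range (n + k + 1), A m n * jfpQ α β b p m x)
    (hA0 : ∀ m n : ℕ, n + k < m → A m n = 0) :
    ∀ i n : ℕ,
      (k ≤ i →
        ∑ m ∈ Finset.Icc i (n + k), Ccoef α β i m * A m n
          = 2 ^ (μ * (1 - p))
            * (Real.Gamma ((b + (i - k : ℕ)) / p + 1)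
              / Real.Gamma ((b + (i - k : ℕ)) / p + μ + 1))
            * Ccoef α β (i - k) n) ∧
      (i < k → ∑ m ∈ Finset.Icc i (n + k), Ccoef α β i m * A m n = 0) := by
  intro i n
  have hp0 : p ≠ 0 := hp.ne'
  have hEpos : ∀ j : ℕ, 0 < Ecoef b p j :=
    fun j => Real.rpow_pos_of_pos (by norm_num) _
  -- rewrite of the goal's sum in terms of the range-sum when i ≤ n + k
  have hsum : i ≤ n + k →
      (∑ m ∈ Finset.range (n+k+1), A m n * Ccoef α β i m)
        = ∑ m ∈ Finset.Icc i (n + k), Ccoef α β i m * A m n := by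
    intro hi
    have hsub : Finset.Icc i (n+k) ⊆ Finset.range (n+k+1) := by
      intro m hm
      rw [Finset.mem_Icc] at hm
      rw [Finset.mem_range]
      omega
    rw [← Finset.sum_subset hsub]
    · exact Finset.sum_congr rfl fun m _ => mul_comm _ _
    · intro m hm hm2
      rw [Finset.mem_range] at hm
      rw [Finset.mem_Icc] at hm2
      have : ¬ i ≤ m := by omega
      simp [Ccoef, this]
  constructor
  · intro hki
    by_cases hiN : i ≤ n + k
    · have hz := column_identity α β μ p b hμ hp k hμp hb A hA n i hiN
      rw [if_pos hki] at hz
      have hE : Ecoef b p (i-k) = 2 ^ (μ * (1 - p)) * Ecoef b p i := by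
        rw [Ecoef, Ecoef, ← Real.rpow_add (by norm_num : (0:ℝ) < 2)]
        congr 1
        have hkr : ((i - k : ℕ) : ℝ) = (i:ℝ) - (k:ℝ) := by
          exact Nat.cast_sub hki
        rw [hkr, show (k:ℝ) = μ * p from hμp.symm]
        field_simp
        ring
      rw [hE] at hz
      rw [← hsum hiN]
      have hEi : Ecoef b p i ≠ 0 := (hEpos i).ne'
      apply mul_right_cancel₀ hEi
      rw [Gcoef] at hz
      linear_combination -hz
    · have hempty : Finset.Icc i (n+k) = ∅ := Finset.Icc_eq_empty (by omega)
      have hC : Ccoef α β (i-k) n = 0 := by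
        have : ¬ i - k ≤ n := by omega
        simp [Ccoef, this]
      rw [hempty, hC]
      simp
  · intro hik
    have hiN : i ≤ n + k := by omega
    have hz := column_identity α β μ p b hμ hp k hμp hb A hA n i hiN
    rw [if_neg (by omega : ¬ k ≤ i)] at hz
    rw [← hsum hiN]
    have hEi : Ecoef b p i ≠ 0 := (hEpos i).ne'
    exact (mul_eq_zero.mp hz.symm).resolve_right hEi
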